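/- Let d ≥ 2 be an integer and z a real number with |z| < 1/(d−1). Then the series ∑_{n≥1} (d−1)^{n−1}·C(n−1+1/(d−1), n−1)·z^n/n converges and its sum equals (1−(d−1)z)^{−1/(d−1)} − 1. Equivalently, the total weight of (b,d)-ary increasing trees of size n is T_n = (n−1)!·(d−1)^{n−1}·C(n−1+1/(d−1), n−1), i.e. T_n/n! is the n-th Taylor coefficient of (1−(d−1)z)^{−1/(d−1)} − 1 at z = 0. -/

import Mathlib

/-- The generalized binomial coefficient `C(x, n) = x(x-1)⋯(x-n+1)/n!`. -/
noncomputable def genBinom (x : ℝ) (n : ℕ) : ℝ :=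
    (∏ i ∈ Finset.range n, (x - i)) / (n.factorial : ℝ)


open Finset

lemma genBinom_zero (x : ℝ) : genBinom x 0 = 1 := by simp [genBinom]

lemma genBinom_succ (x : ℝ) (n : ℕ) :
    genBinom x (n + 1) = (x - n) / (n + 1) * genBinom x n := by
  have h2 : (n.factorial : ℝ) ≠ 0 := Nat.cast_ne_zero.2 n.factorial_ne_zero
  have h3 : ((n : ℝ) + 1) ≠ 0 := by positivity
  rw [genBinom, genBinom, Finset.prod_range_succ, Nat.factorial_succ]
  push_cast
  field_simp

lemma genBinom_reflect (a : ℝ) (n : ℕ) :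
    genBinom ((n : ℝ) - 1 + a) n = (-1) ^ n * genBinom (-a) n := by
  have h1 : ∏ i ∈ range n, ((n : ℝ) - 1 + a - i) = ∏ i ∈ range n, (a + i) := by
    rw [← Finset.prod_range_reflect (fun i => a + i) n]
    refine Finset.prod_congr rfl fun i hi => ?_
    rw [Finset.mem_range] at hi
    have h1n : 1 ≤ n := Nat.one_le_of_lt (Nat.lt_of_le_of_lt (Nat.zero_le i) hi)
    have hin : i ≤ n - 1 := Nat.le_sub_one_of_lt hi
    push_cast [Nat.cast_sub hin, Nat.cast_sub h1n]
    ring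
  have h2 : ∏ i ∈ range n, (-a - (i : ℝ)) = (-1) ^ n * ∏ i ∈ range n, (a + i) := by
    have : ∀ i ∈ range n, (-a - (i : ℝ)) = (-1) * (a + i) := fun i _ => by ring
    rw [Finset.prod_congr rfl this, Finset.prod_mul_distrib, Finset.prod_const,
      Finset.card_range]
  have hsq : ((-1 : ℝ)) ^ n * (-1) ^ n = 1 := by
    rw [← pow_add, ← two_mul, pow_mul]; norm_num
  rw [genBinom, genBinom, h1, h2, ← mul_div_assoc, ← mul_assoc, hsq, one_mul]

lemma abs_genBinom_succ {a : ℝ} (ha : 0 < a) (n : ℕ) :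
    |genBinom (-a) (n + 1)| = ((n + a) / (n + 1)) * |genBinom (-a) n| := by
  rw [genBinom_succ, abs_mul, abs_div]
  have h1 : |-a - (n:ℝ)| = (n:ℝ) + a := by
    have : -a - (n:ℝ) < 0 := by
      have : (0:ℝ) ≤ (n:ℝ) := Nat.cast_nonneg n
      linarith
    rw [abs_of_neg this]; ring
  have h2 : |(n:ℝ) + 1| = (n:ℝ) + 1 := abs_of_pos (by positivity)
  rw [h1, h2]

-- summability of ∑ c n y^n
lemma sumC {a : ℝ} (ha : 0 < a) (ha1 : a ≤ 1) (y : ℝ) (hy : |y| < 1) :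
    Summable (fun n : ℕ => genBinom (-a) n * y ^ n) := by
  apply summable_of_ratio_norm_eventually_le (r := |y|) hy
  filter_upwards with n
  have hr : |genBinom (-a) (n + 1)| ≤ |genBinom (-a) n| := by
    rw [abs_genBinom_succ ha]
    have h1 : ((n : ℝ) + a) / (n + 1) ≤ 1 := by
      rw [div_le_one (by positivity)]; linarith
    nlinarith [abs_nonneg (genBinom (-a) n)]
  simp only [Real.norm_eq_abs, abs_mul, abs_pow, pow_succ]
  calc |genBinom (-a) (n+1)| * (|y| ^ n * |y|) ≤ |genBinom (-a) n| * (|y| ^ n * |y|) := by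
        apply mul_le_mul_of_nonneg_right hr (by positivity)
    _ = |y| * (|genBinom (-a) n| * |y| ^ n) := by ring

-- summability of derivative-type series
lemma sumA {a : ℝ} (ha : 0 < a) (ha1 : a ≤ 1) (y : ℝ) (hy : |y| < 1) :
    Summable (fun n : ℕ => (n : ℝ) * genBinom (-a) n * y ^ (n - 1)) := by
  set r : ℝ := (1 + |y|) / 2 with hr_def
  have hr1 : r < 1 := by rw [hr_def]; linarith
  have hyr : |y| < r := by rw [hr_def]; linarith [abs_nonneg y]
  apply summable_of_ratio_norm_eventually_le (r := r) hr1
  obtain ⟨N, hN⟩ := exists_nat_gt (|y| / (r - |y|))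
  rw [Filter.eventually_atTop]
  refine ⟨max N 1, fun n hn => ?_⟩
  have hn1 : 1 ≤ n := le_trans (le_max_right N 1) hn
  have hnN : (|y| / (r - |y|)) < n := lt_of_lt_of_le hN
    (by exact_mod_cast le_trans (le_max_left N 1) hn)
  have hkey : ((n : ℝ) + a) * |y| ≤ r * n := by
    have h1 : (0:ℝ) < r - |y| := by linarith
    have h2 : |y| < (n : ℝ) * (r - |y|) := by
      rw [div_lt_iff₀ h1] at hnN; linarith
    have h3 : a * |y| ≤ |y| := by nlinarith [abs_nonneg y]
    nlinarith
  have hn1' : (1:ℝ) ≤ (n : ℝ) := by exact_mod_cast hn1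
  have hsucc : n - 1 + 1 = n := Nat.succ_pred_eq_of_pos hn1
  have hyp : |y| ^ n = |y| ^ (n - 1) * |y| := by
    conv_lhs => rw [← hsucc]
    rw [pow_succ]
  simp only [Real.norm_eq_abs, abs_mul, abs_pow, Nat.add_sub_cancel, Nat.abs_cast]
  rw [abs_genBinom_succ ha, hyp]
  push_cast
  have hdiv : ((n:ℝ) + 1) * (((n:ℝ) + a) / ((n:ℝ) + 1)) = (n:ℝ) + a := by
    field_simp
  calc ((n:ℝ) + 1) * (((n:ℝ) + a) / ((n:ℝ) + 1) * |genBinom (-a) n|)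
        * (|y| ^ (n - 1) * |y|)
      = (((n:ℝ) + a) * |y|) * (|genBinom (-a) n| * |y| ^ (n - 1)) := by
        rw [← mul_assoc, ← mul_assoc, hdiv]; ring
    _ ≤ (r * n) * (|genBinom (-a) n| * |y| ^ (n - 1)) :=
        mul_le_mul_of_nonneg_right hkey (by positivity)
    _ = r * ((n:ℝ) * |genBinom (-a) n| * |y| ^ (n - 1)) := by ring

lemma binomialSeriesAux {a : ℝ} (ha : 0 < a) (ha1 : a ≤ 1) (x : ℝ) (hx : |x| < 1) :
    HasSum (fun n : ℕ => genBinom (-a) n * x ^ n) ((1 + x) ^ (-a)) := by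
  set c : ℕ → ℝ := fun n => genBinom (-a) n with hc_def
  set G : ℝ → ℝ := fun y => ∑' n : ℕ, c n * y ^ n with hG_def
  set D : ℝ → ℝ := fun y => ∑' n : ℕ, (n : ℝ) * c n * y ^ (n - 1) with hD_def
  set ρ : ℝ := (1 + |x|) / 2 with hρ_def
  have hρ1 : ρ < 1 := by rw [hρ_def]; linarith
  have hxρ : |x| < ρ := by rw [hρ_def]; linarith [abs_nonneg x]
  have hρ0 : 0 < ρ := by rw [hρ_def]; positivity
  set t : Set ℝ := Set.Ioo (-ρ) ρ with ht_def
  have ht_mem : ∀ y ∈ t, |y| < ρ := fun y hy => abs_lt.2 ⟨hy.1, hy.2⟩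
  have ht1 : ∀ y ∈ t, |y| < 1 := fun y hy => (ht_mem y hy).trans hρ1
  -- the uniform bound
  set u : ℕ → ℝ := fun n => (n : ℝ) * |c n| * ρ ^ (n - 1) with hu_def
  have hu : Summable u := by
    have := (sumA ha ha1 ρ (by rwa [abs_of_pos hρ0])).abs
    refine this.congr fun n => ?_
    simp [hu_def, abs_mul, abs_of_pos hρ0, abs_pow, hc_def]
  -- derivative of each term
  have hderiv : ∀ (n : ℕ) (y : ℝ),
      HasDerivAt (fun z => c n * z ^ n) ((n : ℝ) * c n * y ^ (n - 1)) y := by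
    intro n y
    have := (hasDerivAt_pow n y).const_mul (c n)
    refine this.congr_deriv (Eq.symm ?_)
    ring
  have hbound : ∀ (n : ℕ), ∀ y ∈ t, ‖(n : ℝ) * c n * y ^ (n - 1)‖ ≤ u n := by
    intro n y hy
    simp only [Real.norm_eq_abs, abs_mul, abs_pow, Nat.abs_cast, hu_def]
    have hpw : |y| ^ (n - 1) ≤ ρ ^ (n - 1) :=
      pow_le_pow_left₀ (abs_nonneg y) (ht_mem y hy).le _
    have : (0:ℝ) ≤ (n : ℝ) * |c n| := by positivity
    exact mul_le_mul_of_nonneg_left hpw this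
  have hg0 : Summable fun n : ℕ => c n * (0:ℝ) ^ n := by
    apply summable_of_ne_finset_zero (s := {0})
    intro n hn
    simp only [Finset.mem_singleton] at hn
    simp [zero_pow hn]
  have h0t : (0:ℝ) ∈ t := by constructor <;> simp [hρ0] <;> linarith
  have keyderiv : ∀ y ∈ t, HasDerivAt G (D y) y := fun y hy =>
    hasDerivAt_tsum_of_isPreconnected hu isOpen_Ioo (convex_Ioo _ _).isPreconnected
      (fun n z _ => hderiv n z) hbound h0t hg0 hy
  -- the ODE
  have ode : ∀ y ∈ t, (1 + y) * D y = -a * G y := by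
    intro y hy
    have hy1 := ht1 y hy
    have hA : Summable (fun n : ℕ => (n : ℝ) * c n * y ^ (n - 1)) := sumA ha ha1 y hy1
    have hC : Summable (fun n : ℕ => c n * y ^ n) := sumC ha ha1 y hy1
    have hA1 : Summable (fun n : ℕ => ((n : ℝ) + 1) * c (n + 1) * y ^ n) := by
      have := (summable_nat_add_iff 1).2 hA
      refine this.congr fun n => ?_
      push_cast [Nat.add_sub_cancel]
      ring
    have hB : Summable (fun n : ℕ => (n : ℝ) * c n * y ^ n) := by
      have := hA.mul_left y
      refine this.congr fun n => ?_
      cases n with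
      | zero => simp
      | succ m =>
        push_cast [Nat.add_sub_cancel]
        ring
    have h1 : D y = ∑' n : ℕ, ((n : ℝ) + 1) * c (n + 1) * y ^ n := by
      show (∑' n : ℕ, (n : ℝ) * c n * y ^ (n - 1)) = _
      rw [hA.tsum_eq_zero_add]
      simp only [Nat.cast_zero, zero_mul, zero_add, Nat.add_sub_cancel]
      push_cast
      rfl
    have h2 : y * D y = ∑' n : ℕ, (n : ℝ) * c n * y ^ n := by
      rw [hD_def, ← tsum_mul_left]
      refine tsum_congr fun n => ?_
      cases n with
      | zero => simp
      | succ m =>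
        push_cast [Nat.add_sub_cancel]
        ring
    have hrec : ∀ n : ℕ, ((n : ℝ) + 1) * c (n + 1) = (-a - n) * c n := by
      intro n
      rw [hc_def]
      simp only
      rw [genBinom_succ]
      have : ((n : ℝ) + 1) ≠ 0 := by positivity
      field_simp
    calc (1 + y) * D y = D y + y * D y := by ring
      _ = (∑' n : ℕ, ((n : ℝ) + 1) * c (n + 1) * y ^ n)
          + ∑' n : ℕ, (n : ℝ) * c n * y ^ n := by rw [h2, h1]
      _ = ∑' n : ℕ, (((n : ℝ) + 1) * c (n + 1) * y ^ n + (n : ℝ) * c n * y ^ n) :=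
          (hA1.tsum_add hB).symm
      _ = ∑' n : ℕ, -a * (c n * y ^ n) := by
          refine tsum_congr fun n => ?_
          rw [hrec n]
          ring
      _ = -a * G y := by rw [tsum_mul_left]
  -- constancy of φ
  set φ : ℝ → ℝ := fun y => G y * (1 + y) ^ a with hφ_def
  have hφderiv : ∀ y ∈ t, HasDerivAt φ 0 y := by
    intro y hy
    have hy1 : (0:ℝ) < 1 + y := by
      have := (ht1 y hy)
      rw [abs_lt] at this
      linarith
    have hP : HasDerivAt (fun z : ℝ => (1 + z) ^ a) (a * (1 + y) ^ (a - 1)) y := by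
      have h1 : HasDerivAt (fun z : ℝ => 1 + z) 1 y := (hasDerivAt_id y).const_add 1
      have h2 := (Real.hasDerivAt_rpow_const (x := 1 + y) (p := a) (Or.inl hy1.ne')).comp y h1
      simpa [Function.comp_def] using h2
    have := (keyderiv y hy).mul hP
    refine this.congr_deriv (Eq.symm ?_)
    have e : (1:ℝ) + (a - 1) = a := by ring
    have hsplit : (1 + y) ^ a = (1 + y) * (1 + y) ^ (a - 1) := by
      conv_lhs => rw [← e]
      rw [Real.rpow_add hy1, Real.rpow_one]
    have hode := ode y hy
    rw [hsplit]
    linear_combination (-(1 + y) ^ (a - 1)) * hode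
  have hG0 : G 0 = 1 := by
    rw [hG_def]
    simp only
    rw [tsum_eq_single 0 (fun n hn => by simp [zero_pow hn])]
    simp [hc_def, genBinom_zero]
  have hφx : φ x = 1 := by
    have hsub : ∀ y : ℝ, y ∈ Set.Icc (-|x|) |x| → y ∈ t := by
      intro y hy
      constructor
      · linarith [hy.1]
      · linarith [hy.2]
    have hcont : ContinuousOn φ (Set.Icc (-|x|) |x|) :=
      fun y hy => ((hφderiv y (hsub y hy)).continuousAt).continuousWithinAt
    have hder : ∀ y ∈ Set.Ico (-|x|) |x|, HasDerivWithinAt φ 0 (Set.Ici y) y :=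
      fun y hy => (hφderiv y (hsub y ⟨hy.1, hy.2.le⟩)).hasDerivWithinAt
    have hconst := constant_of_has_deriv_right_zero hcont hder
    have hx_mem : x ∈ Set.Icc (-|x|) |x| := ⟨neg_abs_le x, le_abs_self x⟩
    have h0_mem : (0:ℝ) ∈ Set.Icc (-|x|) |x| := ⟨by simp [abs_nonneg x], abs_nonneg x⟩
    have e1 := hconst x hx_mem
    have e2 := hconst 0 h0_mem
    rw [e1, ← e2, hφ_def]
    simp [hG0]
  have hx1 : (0:ℝ) < 1 + x := by
    rw [abs_lt] at hx; linarith
  have hGx : G x = (1 + x) ^ (-a) := by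
    have hpos : (0:ℝ) < (1 + x) ^ a := Real.rpow_pos_of_pos hx1 a
    have : G x * (1 + x) ^ a = 1 := hφx
    rw [Real.rpow_neg hx1.le]
    field_simp at this ⊢
    linarith [this]
  have := (sumC ha ha1 x hx).hasSum
  rwa [show ∑' n : ℕ, genBinom (-a) n * x ^ n = (1 + x) ^ (-a) from hGx] at this


/-- For an integer `d ≥ 2` and real `z` with `|z| < 1/(d-1)`, the series
`∑_{n ≥ 1} (d-1)^{n-1} · C(n-1+1/(d-1), n-1) · z^n / n` converges with sum
`(1-(d-1)z)^{-1/(d-1)} - 1`; i.e. the total weight of `(b,d)`-ary increasing trees of size `n`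
is `T_n = (n-1)!·(d-1)^{n-1}·C(n-1+1/(d-1), n-1)`.  (Here the sum is indexed by `n = m+1`,
`m ∈ ℕ`.) -/
theorem bdary_total_weights (d : ℕ) (hd : 2 ≤ d) (z : ℝ) (hz : |z| < 1 / ((d : ℝ) - 1)) :
    HasSum
      (fun m : ℕ => ((d : ℝ) - 1) ^ m * genBinom ((m : ℝ) + 1 / ((d : ℝ) - 1)) m
        * z ^ (m + 1) / ((m : ℝ) + 1))
      ((1 - ((d : ℝ) - 1) * z) ^ (-(1 / ((d : ℝ) - 1))) - 1) := by
  have hd1 : (1:ℝ) ≤ (d:ℝ) - 1 := by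
    have : (2:ℝ) ≤ (d:ℝ) := by exact_mod_cast hd
    linarith
  have hd0 : (0:ℝ) < (d:ℝ) - 1 := by linarith
  set a : ℝ := 1 / ((d:ℝ) - 1) with ha_def
  have ha : 0 < a := by rw [ha_def]; positivity
  have ha1 : a ≤ 1 := by rw [ha_def, div_le_one hd0]; linarith
  have hmul : ((d:ℝ) - 1) * a = 1 := by rw [ha_def]; field_simp
  set w : ℝ := ((d:ℝ) - 1) * z with hw_def
  have hw : |w| < 1 := by
    rw [hw_def, abs_mul, abs_of_pos hd0]
    calc ((d:ℝ) - 1) * |z| < ((d:ℝ) - 1) * (1 / ((d:ℝ) - 1)) :=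
          mul_lt_mul_of_pos_left hz hd0
      _ = 1 := by field_simp
  have hx : |(-w)| < 1 := by rwa [abs_neg]
  have H := binomialSeriesAux ha ha1 (-w) hx
  have hval : (1:ℝ) + -w = 1 - ((d:ℝ) - 1) * z := by rw [hw_def]; ring
  rw [hval] at H
  have hterm : ∀ n : ℕ, genBinom (-a) n * (-w) ^ n = genBinom ((n : ℝ) - 1 + a) n * w ^ n := by
    intro n
    rw [genBinom_reflect, neg_pow]
    ring
  rw [funext hterm] at H
  have H1 := (hasSum_nat_add_iff' (f := fun n : ℕ => genBinom ((n : ℝ) - 1 + a) n * w ^ n) 1).2 H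
  simp only [Finset.range_one, Finset.sum_singleton, Nat.cast_zero, pow_zero, mul_one,
    genBinom_zero] at H1
  have heq : ∀ m : ℕ, genBinom (((m + 1 : ℕ) : ℝ) - 1 + a) (m + 1) * w ^ (m + 1)
      = ((d:ℝ) - 1) ^ m * genBinom ((m:ℝ) + a) m * z ^ (m + 1) / ((m:ℝ) + 1) := by
    intro m
    have hc : ((m + 1 : ℕ) : ℝ) - 1 + a = (m:ℝ) + a := by push_cast; ring
    rw [hc, genBinom_succ, hw_def, mul_pow]
    linear_combination ((((d:ℝ) - 1) ^ m * genBinom ((m:ℝ) + a) m * z ^ (m + 1))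
      / ((m:ℝ) + 1)) * hmul
  convert H1 using 1
  · rfl
  exact funext fun m => (heq m).symm
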